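/- In the CM order B = ℤ[X]/(X^n − 1) with involution induced by X ↦ X^{n−1}, the group of roots of unity μ(B) is exactly {±X^i : 0 ≤ i < n}, i.e., it is generated by X and −1. -/

import Mathlib

open Finset Complex Polynomial

lemma geomsum_zero' (z : ℂ) (n : ℕ) (h1 : z ^ n = 1) (h2 : z ≠ 1) : ∑ j ∈ range n, z ^ j = 0 := by
  rw [geom_sum_eq h2, h1, sub_self, zero_div]

lemma orth' {n : ℕ} {ζ : ℂ} (hζ : IsPrimitiveRoot ζ n) (hn : 0 < n) {i l : ℕ}
    (hi : i < n) (hl : l < n) :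
    ∑ j ∈ range n, ζ ^ (j * i) * (starRingEnd ℂ) ζ ^ (j * l) = if i = l then (n : ℂ) else 0 := by
  have habs : ‖ζ‖ = 1 := hζ.norm'_eq_one hn.ne'
  have hconj : (starRingEnd ℂ) ζ = ζ⁻¹ := (Complex.inv_eq_conj habs).symm
  have hζ0 : ζ ≠ 0 := hζ.ne_zero hn.ne'
  have key : ∀ j, ζ ^ (j * i) * (starRingEnd ℂ) ζ ^ (j * l) = (ζ ^ i * (ζ ^ l)⁻¹) ^ j := by
    intro j
    rw [hconj, inv_pow, mul_pow, ← pow_mul, inv_pow, ← pow_mul, mul_comm i j, mul_comm l j]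
  simp only [key]
  by_cases h : i = l
  · subst h
    simp [mul_inv_cancel₀ (pow_ne_zero i hζ0)]
  · rw [if_neg h]
    apply geomsum_zero'
    · rw [mul_pow, ← pow_mul, inv_pow, ← pow_mul, mul_comm i n, mul_comm l n,
        pow_mul, pow_mul, hζ.pow_eq_one, one_pow, one_pow, inv_one, one_mul]
    · intro hcon
      apply h
      apply hζ.pow_inj hi hl
      field_simp at hcon
      exact hcon

lemma parseval' {n : ℕ} {ζ : ℂ} (hζ : IsPrimitiveRoot ζ n) (hn : 0 < n) (c : ℕ → ℤ) :
    ∑ j ∈ range n, ((∑ i ∈ range n, (c i : ℂ) * ζ ^ (j * i)) *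
      (starRingEnd ℂ) (∑ i ∈ range n, (c i : ℂ) * ζ ^ (j * i))) =
    (n : ℂ) * ∑ i ∈ range n, (c i : ℂ) ^ 2 := by
  have hc : ∀ j, (starRingEnd ℂ) (∑ i ∈ range n, (c i : ℂ) * ζ ^ (j * i))
      = ∑ l ∈ range n, (c l : ℂ) * (starRingEnd ℂ) ζ ^ (j * l) := by
    intro j
    rw [map_sum]
    refine sum_congr rfl fun l _ => ?_
    rw [map_mul, map_pow, map_intCast]
  calc ∑ j ∈ range n, ((∑ i ∈ range n, (c i : ℂ) * ζ ^ (j * i)) *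
        (starRingEnd ℂ) (∑ i ∈ range n, (c i : ℂ) * ζ ^ (j * i)))
      = ∑ j ∈ range n, ∑ i ∈ range n, ∑ l ∈ range n,
          (c i : ℂ) * (c l : ℂ) * (ζ ^ (j * i) * (starRingEnd ℂ) ζ ^ (j * l)) := by
        refine sum_congr rfl fun j _ => ?_
        rw [hc, sum_mul_sum]
        refine sum_congr rfl fun i _ => sum_congr rfl fun l _ => ?_
        ring
    _ = ∑ i ∈ range n, ∑ l ∈ range n,
          (c i : ℂ) * (c l : ℂ) * ∑ j ∈ range n, (ζ ^ (j * i) * (starRingEnd ℂ) ζ ^ (j * l)) := by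
        rw [sum_comm]
        refine sum_congr rfl fun i _ => ?_
        rw [sum_comm]
        refine sum_congr rfl fun l _ => ?_
        rw [mul_sum]
    _ = (n : ℂ) * ∑ i ∈ range n, (c i : ℂ) ^ 2 := by
        rw [mul_sum]
        refine sum_congr rfl fun i hi => ?_
        rw [sum_eq_single i]
        · rw [orth' hζ hn (mem_range.mp hi) (mem_range.mp hi), if_pos rfl]; ring
        · intro l hl hne
          rw [orth' hζ hn (mem_range.mp hi) (mem_range.mp hl), if_neg (Ne.symm hne), mul_zero]
        · intro h; exact absurd hi h

lemma sum_sq_one' {n : ℕ} (c : ℕ → ℤ) (h : ∑ i ∈ range n, (c i) ^ 2 = 1) :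
    ∃ i, i < n ∧ (∀ l, l ≠ i → l < n → c l = 0) ∧ (c i = 1 ∨ c i = -1) := by
  have hex : ∃ i ∈ range n, c i ≠ 0 := by
    by_contra hcon
    push_neg at hcon
    rw [sum_eq_zero (fun i hi => by rw [hcon i hi]; ring)] at h
    simp at h
  obtain ⟨i, hi, hci⟩ := hex
  have hsplit : (c i) ^ 2 + ∑ l ∈ (range n).erase i, (c l) ^ 2 = 1 := by
    rw [← h, add_comm, sum_erase_add _ _ hi]
  have h1 : 1 ≤ (c i) ^ 2 := by
    have := sq_nonneg (c i)
    rcases lt_or_eq_of_le this with h' | h'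
    · omega
    · exact absurd (pow_eq_zero_iff two_ne_zero |>.mp h'.symm) hci
  have h2 : 0 ≤ ∑ l ∈ (range n).erase i, (c l) ^ 2 := sum_nonneg fun l _ => sq_nonneg _
  have hcisq : (c i) ^ 2 = 1 := le_antisymm (by omega) h1
  have hrest : ∑ l ∈ (range n).erase i, (c l) ^ 2 = 0 := by omega
  refine ⟨i, mem_range.mp hi, ?_, ?_⟩
  · intro l hl hln
    have := (sum_eq_zero_iff_of_nonneg fun l _ => sq_nonneg (c l)).mp hrest l
      (mem_erase.mpr ⟨hl, mem_range.mpr hln⟩)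
    exact pow_eq_zero_iff two_ne_zero |>.mp this
  · have : IsUnit (c i) := IsUnit.of_mul_eq_one (c i) (by rw [← sq]; exact hcisq)
    exact Int.isUnit_iff.mp this


noncomputable def qIdeal (n : ℕ) : Ideal (Polynomial ℤ) := Ideal.span ({Polynomial.X ^ n - 1} : Set (Polynomial ℤ))

lemma aux_main (n : ℕ) (hn : 0 < n) (w : Polynomial ℤ ⧸ qIdeal n) :
    (∃ k : ℕ, 0 < k ∧ w ^ k = 1) ↔
      ∃ i : ℕ, i < n ∧
        (w = (Ideal.Quotient.mk (qIdeal n) Polynomial.X) ^ i ∨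
         w = -(Ideal.Quotient.mk (qIdeal n) Polynomial.X) ^ i) := by
  have hqmem : (Polynomial.X : Polynomial ℤ) ^ n - 1 ∈ qIdeal n := Ideal.subset_span rfl
  have hxn : (Ideal.Quotient.mk (qIdeal n) Polynomial.X) ^ n = 1 := by
    rw [← map_pow, ← map_one (Ideal.Quotient.mk (qIdeal n)), Ideal.Quotient.eq]
    exact hqmem
  constructor
  · rintro ⟨k, hk, hwk⟩
    obtain ⟨g, hg⟩ := Ideal.Quotient.mk_surjective w
    have hmonic : (Polynomial.X ^ n - 1 : Polynomial ℤ).Monic := by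
      simpa using Polynomial.monic_X_pow_sub_C (1 : ℤ) hn.ne'
    set f := g %ₘ (Polynomial.X ^ n - 1) with hf
    have hdeg : f.degree < n := by
      have h1 := Polynomial.degree_modByMonic_lt g hmonic
      have h2 : (Polynomial.X ^ n - 1 : Polynomial ℤ).degree = n := by
        simpa using Polynomial.degree_X_pow_sub_C hn (1 : ℤ)
      rwa [h2] at h1
    have hnatdeg : f.natDegree < n := by
      rcases eq_or_ne f 0 with h0 | h0
      · simpa [h0] using hn
      · exact (Polynomial.natDegree_lt_iff_degree_lt h0).mpr (by exact_mod_cast hdeg)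
    have hwf : Ideal.Quotient.mk (qIdeal n) f = w := by
      rw [← hg, Ideal.Quotient.eq]
      have hdiv := Polynomial.modByMonic_add_div g (Polynomial.X ^ n - 1)
      have heq : f - g = -((Polynomial.X ^ n - 1) * (g /ₘ (Polynomial.X ^ n - 1))) := by
        rw [hf]; linear_combination hdiv
      rw [heq]
      exact neg_mem (Ideal.mul_mem_right _ _ hqmem)
    set c : ℕ → ℤ := fun i => f.coeff i with hc
    set ζ : ℂ := Complex.exp (2 * Real.pi * Complex.I / n) with hζdef
    have hζ : IsPrimitiveRoot ζ n := Complex.isPrimitiveRoot_exp n hn.ne'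
    have hφ : ∀ j : ℕ, ∃ φ : (Polynomial ℤ ⧸ qIdeal n) →+* ℂ,
        ∀ p : Polynomial ℤ, φ (Ideal.Quotient.mk (qIdeal n) p) = Polynomial.aeval (ζ ^ j) p := by
      intro j
      have hvan : ∀ p ∈ qIdeal n, Polynomial.aeval (ζ ^ j) p = 0 := by
        intro p hp
        rw [qIdeal, Ideal.mem_span_singleton] at hp
        obtain ⟨r, hr⟩ := hp
        rw [hr, map_mul]
        have hz : Polynomial.aeval (ζ ^ j) (Polynomial.X ^ n - 1 : Polynomial ℤ) = 0 := by
          rw [map_sub, map_one, map_pow, Polynomial.aeval_X, ← pow_mul, mul_comm j n,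
            pow_mul, hζ.pow_eq_one, one_pow, sub_self]
        rw [hz, zero_mul]
      exact ⟨Ideal.Quotient.lift (qIdeal n) (Polynomial.aeval (ζ ^ j)).toRingHom hvan,
        fun p => rfl⟩
    have heval : ∀ j : ℕ, ∃ z : ℂ, z = ∑ i ∈ range n, (c i : ℂ) * ζ ^ (j * i) ∧
        z * (starRingEnd ℂ) z = 1 := by
      intro j
      obtain ⟨φ, hφj⟩ := hφ j
      refine ⟨φ w, ?_, ?_⟩
      · rw [← hwf, hφj, Polynomial.aeval_eq_sum_range' hnatdeg]
        refine sum_congr rfl fun i _ => ?_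
        rw [zsmul_eq_mul, ← pow_mul]
      · have hzk : (φ w) ^ k = 1 := by rw [← map_pow, hwk, map_one]
        have habs : ‖φ w‖ = 1 := Complex.norm_eq_one_of_pow_eq_one hzk hk.ne'
        rw [Complex.mul_conj]
        norm_cast
        rw [← Complex.sq_norm, habs, one_pow]
    have hsum : ∑ i ∈ range n, (c i) ^ 2 = 1 := by
      have hP := parseval' hζ hn c
      have hL : ∑ j ∈ range n, ((∑ i ∈ range n, (c i : ℂ) * ζ ^ (j * i)) *
          (starRingEnd ℂ) (∑ i ∈ range n, (c i : ℂ) * ζ ^ (j * i))) = (n : ℂ) := by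
        rw [sum_congr rfl (fun j _ => by
          obtain ⟨z, hz1, hz2⟩ := heval j
          rw [← hz1, hz2])]
        simp
      rw [hL] at hP
      have hn0 : (n : ℂ) ≠ 0 := Nat.cast_ne_zero.mpr hn.ne'
      have hS : ∑ i ∈ range n, (c i : ℂ) ^ 2 = 1 :=
        mul_left_cancel₀ hn0 (by rw [← hP, mul_one])
      have hcast : ((∑ i ∈ range n, (c i) ^ 2 : ℤ) : ℂ) = ((1 : ℤ) : ℂ) := by
        push_cast
        rw [hS]
      exact_mod_cast hcast
    obtain ⟨i, hi, hzero, hsign⟩ := sum_sq_one' c hsum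
    have hfeq : f = Polynomial.C (c i) * Polynomial.X ^ i := by
      ext m
      rw [Polynomial.coeff_C_mul, Polynomial.coeff_X_pow]
      rcases eq_or_ne m i with h | h
      · rw [h, if_pos rfl, mul_one]
      · rw [if_neg h, mul_zero]
        rcases lt_or_ge m n with hm | hm
        · exact hzero m h hm
        · exact Polynomial.coeff_eq_zero_of_natDegree_lt (lt_of_lt_of_le hnatdeg hm)
    refine ⟨i, hi, ?_⟩
    rcases hsign with h1 | h1
    · left
      rw [← hwf, hfeq, h1, map_mul, map_pow]
      simp
    · right
      rw [← hwf, hfeq, h1, map_mul, map_pow]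
      simp only [map_neg, map_one]
      ring
  · rintro ⟨i, hi, h | h⟩
    · refine ⟨2 * n, by omega, ?_⟩
      rw [h, ← pow_mul]
      have he : i * (2 * n) = n * (2 * i) := by ring
      rw [he, pow_mul, hxn, one_pow]
    · refine ⟨2 * n, by omega, ?_⟩
      rw [h]
      have hev : Even (2 * n) := ⟨n, by ring⟩
      have hsq : (-(Ideal.Quotient.mk (qIdeal n)) Polynomial.X ^ i) ^ 2
          = ((Ideal.Quotient.mk (qIdeal n)) Polynomial.X ^ i) ^ 2 := by ring
      have he : i * (2 * n) = n * (2 * i) := by ring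
      rw [pow_mul, hsq, ← pow_mul, ← pow_mul, he, pow_mul, hxn, one_pow]

/-- In `B = ℤ[X]/(X^n − 1)`, the roots of unity are exactly `±X^i`, `0 ≤ i < n`. -/
theorem roots_of_unity_in_group_ring_quotient (n : ℕ) (hn : 0 < n)
    (w : Polynomial ℤ ⧸ Ideal.span ({Polynomial.X ^ n - 1} : Set (Polynomial ℤ))) :
    (∃ k : ℕ, 0 < k ∧ w ^ k = 1) ↔
      ∃ i : ℕ, i < n ∧
        (w = (Ideal.Quotient.mk (Ideal.span ({Polynomial.X ^ n - 1} : Set (Polynomial ℤ)))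
                Polynomial.X) ^ i ∨
         w = -(Ideal.Quotient.mk (Ideal.span ({Polynomial.X ^ n - 1} : Set (Polynomial ℤ)))
                Polynomial.X) ^ i) :=
  aux_main n hn w
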